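/- If B_s is a primitive s-form with s < n on a symplectic manifold of dimension 2n, then dB_s = B_{s+1} + L B_{s-1} for some primitive forms B_{s+1} ∈ P^{s+1}, B_{s-1} ∈ P^{s-1}; if s = n then dB_n = L B_{n-1} for some primitive B_{n-1} ∈ P^{n-1}. Consequently d maps L^{r,s} into L^{r,s+1} ⊕ L^{r+1,s-1}. -/

import Mathlib

open Finset

section DTwoTermAux

variable {V : Type*} [AddCommGroup V] [Module ℝ V]

/-- A vector concentrated in a degree outside `[0, 2n]` is zero. -/
lemma aux_proj_out (n : ℕ) (Prj : ℤ → Module.End ℝ V)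
    (hsum : ∑ k ∈ Finset.Icc (0 : ℤ) (2 * n), Prj k = 1)
    (horth : ∀ j k : ℤ, j ≠ k → Prj j * Prj k = 0)
    (t : ℤ) (ht : t ∉ Finset.Icc (0 : ℤ) (2 * n))
    (x : V) (hx : Prj t x = x) : x = 0 := by
  have h1 : (∑ k ∈ Finset.Icc (0 : ℤ) (2 * n), Prj k) x = x := by
    rw [hsum, Module.End.one_apply]
  rw [LinearMap.sum_apply] at h1
  have h2 : ∀ k ∈ Finset.Icc (0 : ℤ) (2 * n), Prj k x = 0 := by
    intro k hk
    have hkt : k ≠ t := fun h => ht (h ▸ hk)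
    rw [← hx, ← Module.End.mul_apply, horth k t hkt, LinearMap.zero_apply]
  rw [Finset.sum_congr rfl h2, Finset.sum_const_zero] at h1
  exact h1.symm

/-- `H` acts on a degree-`t` vector as multiplication by `n - t`. -/
lemma aux_Hact (n : ℕ) (Prj : ℤ → Module.End ℝ V)
    (hsum : ∑ k ∈ Finset.Icc (0 : ℤ) (2 * n), Prj k = 1)
    (horth : ∀ j k : ℤ, j ≠ k → Prj j * Prj k = 0)
    (H : Module.End ℝ V)
    (hH : H = ∑ k ∈ Finset.Icc (0 : ℤ) (2 * n), ((n : ℤ) - k) • Prj k)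
    (t : ℤ) (x : V) (hx : Prj t x = x) : H x = ((n : ℤ) - t) • x := by
  by_cases ht : t ∈ Finset.Icc (0 : ℤ) (2 * n)
  · rw [hH, LinearMap.sum_apply, Finset.sum_eq_single t]
    · rw [LinearMap.smul_apply, hx]
    · intro k _ hkt
      rw [LinearMap.smul_apply, ← hx, ← Module.End.mul_apply, horth k t hkt,
        LinearMap.zero_apply, smul_zero]
    · intro h; exact absurd ht h
  · have hx0 : x = 0 := aux_proj_out n Prj hsum horth t ht x hx
    simp [hx0]

/-- Degree shift under an operator of pure degree `c`. -/
lemma aux_deg (T : Module.End ℝ V) (Prj : ℤ → Module.End ℝ V) (c : ℤ)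
    (hdeg : ∀ k : ℤ, T * Prj k = Prj (k + c) * T)
    (t : ℤ) (x : V) (hx : Prj t x = x) : Prj (t + c) (T x) = T x := by
  have h : (T * Prj t) x = (Prj (t + c) * T) x := by rw [hdeg]
  rw [Module.End.mul_apply, Module.End.mul_apply, hx] at h
  exact h.symm

lemma aux_degLpow (L : Module.End ℝ V) (Prj : ℤ → Module.End ℝ V)
    (hLdeg : ∀ k : ℤ, L * Prj k = Prj (k + 2) * L)
    (t : ℤ) (x : V) (hx : Prj t x = x) :
    ∀ i : ℕ, Prj (t + 2 * i) ((L ^ i) x) = (L ^ i) x := by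
  intro i
  induction i with
  | zero => simpa using hx
  | succ i ih =>
    have h := aux_deg L Prj 2 hLdeg (t + 2 * i) ((L ^ i) x) ih
    have harith : (t + 2 * i) + 2 = t + 2 * (i + 1 : ℕ) := by push_cast; ring
    rw [harith] at h
    rw [pow_succ', Module.End.mul_apply]
    exact h

lemma aux_degΛpow (Λ : Module.End ℝ V) (Prj : ℤ → Module.End ℝ V)
    (hΛdeg : ∀ k : ℤ, Λ * Prj k = Prj (k - 2) * Λ)
    (t : ℤ) (x : V) (hx : Prj t x = x) :
    ∀ i : ℕ, Prj (t - 2 * i) ((Λ ^ i) x) = (Λ ^ i) x := by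
  intro i
  induction i with
  | zero => simpa using hx
  | succ i ih =>
    have h := aux_deg Λ Prj (-2) (by simpa [sub_eq_add_neg] using hΛdeg)
      (t - 2 * i) ((Λ ^ i) x) ih
    have harith : (t - 2 * i) + (-2) = t - 2 * (i + 1 : ℕ) := by push_cast; ring
    rw [harith] at h
    rw [pow_succ', Module.End.mul_apply]
    exact h

/-- Pointwise form of `[Λ, L] = H` on a degree-`t` vector. -/
lemma aux_comm1 (n : ℕ) (Prj : ℤ → Module.End ℝ V)
    (hsum : ∑ k ∈ Finset.Icc (0 : ℤ) (2 * n), Prj k = 1)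
    (horth : ∀ j k : ℤ, j ≠ k → Prj j * Prj k = 0)
    (L Λ H : Module.End ℝ V)
    (hH : H = ∑ k ∈ Finset.Icc (0 : ℤ) (2 * n), ((n : ℤ) - k) • Prj k)
    (sl₁ : Λ * L - L * Λ = H)
    (t : ℤ) (x : V) (hx : Prj t x = x) :
    Λ (L x) = L (Λ x) + ((n : ℤ) - t) • x := by
  have h : (Λ * L) x - (L * Λ) x = H x := by rw [← LinearMap.sub_apply, sl₁]
  rw [Module.End.mul_apply, Module.End.mul_apply,
    aux_Hact n Prj hsum horth H hH t x hx] at h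
  rw [sub_eq_iff_eq_add] at h
  rw [h, add_comm]

/-- Pointwise form of `[Λ, L^{a+1}]` on a degree-`t` vector. -/
lemma aux_comm (n : ℕ) (Prj : ℤ → Module.End ℝ V)
    (hsum : ∑ k ∈ Finset.Icc (0 : ℤ) (2 * n), Prj k = 1)
    (horth : ∀ j k : ℤ, j ≠ k → Prj j * Prj k = 0)
    (L Λ H : Module.End ℝ V)
    (hLdeg : ∀ k : ℤ, L * Prj k = Prj (k + 2) * L)
    (hH : H = ∑ k ∈ Finset.Icc (0 : ℤ) (2 * n), ((n : ℤ) - k) • Prj k)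
    (sl₁ : Λ * L - L * Λ = H) :
    ∀ (a : ℕ) (t : ℤ) (x : V), Prj t x = x →
      Λ ((L ^ (a + 1)) x) =
        (L ^ (a + 1)) (Λ x) + (((a : ℤ) + 1) * ((n : ℤ) - t - (a : ℤ))) • ((L ^ a) x) := by
  intro a
  induction a with
  | zero =>
    intro t x hx
    have h := aux_comm1 n Prj hsum horth L Λ H hH sl₁ t x hx
    have hs : (((0 : ℕ) : ℤ) + 1) * ((n : ℤ) - t - ((0 : ℕ) : ℤ)) = (n : ℤ) - t := by
      push_cast; ring
    simpa [hs] using h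
  | succ a ih =>
    intro t x hx
    have hLx : Prj (t + 2) (L x) = L x := aux_deg L Prj 2 hLdeg t x hx
    have h1 := ih (t + 2) (L x) hLx
    have hbase := aux_comm1 n Prj hsum horth L Λ H hH sl₁ t x hx
    have e3 : (L ^ a) (L x) = (L ^ (a + 1)) x := by
      rw [pow_succ, Module.End.mul_apply]
    have e4 : (L ^ (a + 1)) (L x) = (L ^ (a + 1 + 1)) x := by
      rw [pow_succ (L) (a+1), Module.End.mul_apply]
    rw [e3, e4, hbase, map_add, map_zsmul] at h1
    have e5 : (L ^ (a + 1)) (L (Λ x)) = (L ^ (a + 1 + 1)) (Λ x) := by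
      rw [pow_succ (L) (a+1), Module.End.mul_apply]
    rw [e5] at h1
    rw [h1, add_assoc, ← add_smul]
    congr 1
    push_cast
    ring

/-- If a primitive degree-`t` vector is killed by `L^j` and `n - t` is not among
`0, …, j-1`, it vanishes. -/
lemma aux_kill (n : ℕ) (Prj : ℤ → Module.End ℝ V)
    (hsum : ∑ k ∈ Finset.Icc (0 : ℤ) (2 * n), Prj k = 1)
    (horth : ∀ j k : ℤ, j ≠ k → Prj j * Prj k = 0)
    (L Λ H : Module.End ℝ V)
    (hLdeg : ∀ k : ℤ, L * Prj k = Prj (k + 2) * L)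
    (hH : H = ∑ k ∈ Finset.Icc (0 : ℤ) (2 * n), ((n : ℤ) - k) • Prj k)
    (sl₁ : Λ * L - L * Λ = H) :
    ∀ (j : ℕ) (t : ℤ) (x : V), Prj t x = x → Λ x = 0 → (L ^ j) x = 0 →
      (∀ i : ℕ, i < j → (n : ℤ) - t ≠ (i : ℤ)) → x = 0 := by
  intro j
  induction j with
  | zero =>
    intro t x _ _ hL _
    simpa using hL
  | succ j ih =>
    intro t x hx hp hL hcond
    have h := aux_comm n Prj hsum horth L Λ H hLdeg hH sl₁ j t x hx
    rw [hL, hp, map_zero, map_zero, zero_add] at h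
    by_cases hc : (n : ℤ) - t = (j : ℤ)
    · exact absurd hc (hcond j (Nat.lt_succ_self j))
    · have hc1 : ((j : ℤ) + 1) ≠ 0 := by positivity
      have hc2 : ((j : ℤ) + 1) * ((n : ℤ) - t - (j : ℤ)) ≠ 0 :=
        mul_ne_zero hc1 (sub_ne_zero.mpr hc)
      have hLj : (L ^ j) x = 0 := by
        have h2 : ((((j : ℤ) + 1) * ((n : ℤ) - t - (j : ℤ)) : ℤ) : ℝ) • ((L ^ j) x) = 0 := by
          rw [Int.cast_smul_eq_zsmul, ← h]
        have hc3 : ((((j : ℤ) + 1) * ((n : ℤ) - t - (j : ℤ)) : ℤ) : ℝ) ≠ 0 :=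
          Int.cast_ne_zero.mpr hc2
        exact (smul_eq_zero.mp h2).resolve_left hc3
      exact ih t x hx hp hLj (fun i hi => hcond i (Nat.lt_succ_of_lt hi))

/-- A primitive vector of degree `> n` vanishes. -/
lemma aux_neg (n : ℕ) (Prj : ℤ → Module.End ℝ V)
    (hsum : ∑ k ∈ Finset.Icc (0 : ℤ) (2 * n), Prj k = 1)
    (horth : ∀ j k : ℤ, j ≠ k → Prj j * Prj k = 0)
    (L Λ H : Module.End ℝ V)
    (hLdeg : ∀ k : ℤ, L * Prj k = Prj (k + 2) * L)
    (hH : H = ∑ k ∈ Finset.Icc (0 : ℤ) (2 * n), ((n : ℤ) - k) • Prj k)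
    (sl₁ : Λ * L - L * Λ = H)
    (t : ℤ) (x : V) (hx : Prj t x = x) (hp : Λ x = 0) (ht : (n : ℤ) < t) : x = 0 := by
  have hdeg := aux_degLpow L Prj hLdeg t x hx (2 * n + 1)
  have hout : (t + 2 * ((2 * n + 1 : ℕ) : ℤ)) ∉ Finset.Icc (0 : ℤ) (2 * n) := by
    simp only [Finset.mem_Icc, not_and, not_le]
    intro _
    push_cast
    omega
  have hLj : (L ^ (2 * n + 1)) x = 0 :=
    aux_proj_out n Prj hsum horth _ hout _ hdeg
  refine aux_kill n Prj hsum horth L Λ H hLdeg hH sl₁ (2 * n + 1) t x hx hp hLj ?_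
  intro i _
  have : (0 : ℤ) ≤ (i : ℤ) := Int.ofNat_nonneg i
  omega

end DTwoTermAux

/-- **Two-term decomposition of `d` on primitive forms.**  `V` models the differential
forms of a symplectic manifold `(M^{2n}, ω)` with `dω = 0`: `Prj k` is the projection
onto `k`-forms, `L` the Lefschetz operator, `Λ` its dual, `H = ∑ₖ (n-k) • Prj k`, with
the `sl(2)` relations; `d` is the exterior derivative, which raises degree by one and
commutes with `L` (this encodes `dω = 0`).  If `B` is a primitive `s`-form with `s < n`,
then `dB = B_{s+1} + L B_{s-1}` for some primitive forms `B_{s+1} ∈ P^{s+1}` and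
`B_{s-1} ∈ P^{s-1}`; if `s = n` then `dB = L B_{n-1}` (i.e. the `P^{s+1}`-term
vanishes).  Consequently `d(L^r B) = L^r B_{s+1} + L^{r+1} B_{s-1}`, i.e. `d` maps
`L^{r,s}` into `L^{r,s+1} ⊕ L^{r+1,s-1}`. -/
theorem d_two_term_on_primitive
    (n : ℕ) (V : Type*) [AddCommGroup V] [Module ℝ V]
    (Prj : ℤ → Module.End ℝ V)
    (hsum : ∑ k ∈ Finset.Icc (0 : ℤ) (2 * n), Prj k = 1)
    (horth : ∀ j k : ℤ, j ≠ k → Prj j * Prj k = 0)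
    (hidem : ∀ k : ℤ, Prj k * Prj k = Prj k)
    (L Λ H : Module.End ℝ V)
    (hLdeg : ∀ k : ℤ, L * Prj k = Prj (k + 2) * L)
    (hΛdeg : ∀ k : ℤ, Λ * Prj k = Prj (k - 2) * Λ)
    (hH : H = ∑ k ∈ Finset.Icc (0 : ℤ) (2 * n), ((n : ℤ) - k) • Prj k)
    (sl₁ : Λ * L - L * Λ = H)
    (sl₂ : H * Λ - Λ * H = (2 : ℤ) • Λ)
    (sl₃ : H * L - L * H = (-2 : ℤ) • L)
    (d : Module.End ℝ V)
    (hddeg : ∀ k : ℤ, d * Prj k = Prj (k + 1) * d)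
    (hdL : d * L = L * d) :
    ∀ s : ℕ, s ≤ n → ∀ B : V, Prj s B = B → Λ B = 0 →
      ∃ B₁ B₂ : V,
        (Prj ((s : ℤ) + 1) B₁ = B₁ ∧ Λ B₁ = 0) ∧
        (Prj ((s : ℤ) - 1) B₂ = B₂ ∧ Λ B₂ = 0) ∧
        d B = B₁ + L B₂ ∧
        (s = n → B₁ = 0) ∧
        (∀ r : ℕ, d ((L ^ r) B) = (L ^ r) B₁ + (L ^ (r + 1)) B₂) := by
  intro s hs B hB hΛB
  -- `d` commutes with powers of `L`
  have hdLpow : ∀ (r : ℕ) (x : V), d ((L ^ r) x) = (L ^ r) (d x) := by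
    intro r
    induction r with
    | zero => intro x; simp
    | succ r ih =>
      intro x
      have h1 : (L ^ (r + 1)) x = (L ^ r) (L x) := by rw [pow_succ, Module.End.mul_apply]
      have h2 : (L ^ (r + 1)) (d x) = (L ^ r) (L (d x)) := by
        rw [pow_succ, Module.End.mul_apply]
      rw [h1, ih (L x), h2]
      congr 1
      have := congrArg (fun T : Module.End ℝ V => T x) hdL
      simpa [Module.End.mul_apply] using this
  set m : ℕ := n - s with hm_def
  have hm : (m : ℤ) = (n : ℤ) - (s : ℤ) := by
    have := hs; omega
  -- Step 1 : L^(m+1) B = 0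
  have hX : (L ^ (m + 1)) B = 0 := by
    have hc := aux_comm n Prj hsum horth L Λ H hLdeg hH sl₁ m (s : ℤ) B hB
    rw [hΛB, map_zero, zero_add] at hc
    have hz : ((m : ℤ) + 1) * ((n : ℤ) - (s : ℤ) - (m : ℤ)) = 0 := by
      rw [hm]; ring
    rw [hz, zero_smul] at hc
    have hdegX : Prj ((s : ℤ) + 2 * ((m + 1 : ℕ) : ℤ)) ((L ^ (m + 1)) B) = (L ^ (m + 1)) B :=
      aux_degLpow L Prj hLdeg (s : ℤ) B hB (m + 1)
    exact aux_neg n Prj hsum horth L Λ H hLdeg hH sl₁ _ _ hdegX hc (by push_cast; omega)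
  set y : V := d B with hy_def
  have hy : Prj ((s : ℤ) + 1) y = y := aux_deg d Prj 1 hddeg (s : ℤ) B hB
  -- Step 3 : L^(m+1) y = 0
  have hLy : (L ^ (m + 1)) y = 0 := by
    rw [hy_def, ← hdLpow (m + 1) B, hX, map_zero]
  -- Step 4 : L^(m+q+1) (Λ^q y) = 0 for all q
  have key : ∀ q : ℕ, (L ^ (m + q + 1)) ((Λ ^ q) y) = 0 := by
    intro q
    induction q with
    | zero => simpa using hLy
    | succ q ih =>
      set u : V := (Λ ^ q) y with hu_def
      have hu : Prj (((s : ℤ) + 1) - 2 * (q : ℤ)) u = u :=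
        aux_degΛpow Λ Prj hΛdeg ((s : ℤ) + 1) y hy q
      have hcomm := aux_comm n Prj hsum horth L Λ H hLdeg hH sl₁ (m + q)
        (((s : ℤ) + 1) - 2 * (q : ℤ)) u hu
      rw [ih, map_zero] at hcomm
      -- hcomm : 0 = (L^(m+q+1)) (Λ u) + c • (L^(m+q)) u
      have happ := congrArg L hcomm
      rw [map_zero, map_add, map_zsmul] at happ
      have e1 : L ((L ^ (m + q + 1)) (Λ u)) = (L ^ (m + q + 1 + 1)) (Λ u) := by
        rw [pow_succ' L (m + q + 1), Module.End.mul_apply]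
      have e2 : L ((L ^ (m + q)) u) = (L ^ (m + q + 1)) u := by
        rw [pow_succ' L (m + q), Module.End.mul_apply]
      rw [e1, e2, ih, smul_zero, add_zero] at happ
      have e3 : (Λ ^ (q + 1)) y = Λ u := by
        rw [pow_succ' Λ q, Module.End.mul_apply, hu_def]
      show (L ^ (m + (q + 1) + 1)) ((Λ ^ (q + 1)) y) = 0
      rw [e3]
      have : m + (q + 1) + 1 = m + q + 1 + 1 := by omega
      rw [this]
      exact happ.symm
  -- Step 5 : Λ (Λ y) = 0
  set z : V := Λ (Λ y) with hz_def
  have hzy : ∀ q : ℕ, (Λ ^ q) z = (Λ ^ (q + 2)) y := by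
    intro q
    rw [pow_add, Module.End.mul_apply]
    congr 1
  have claim : ∀ q : ℕ, (Λ ^ q) z = 0 → z = 0 := by
    intro q
    induction q with
    | zero => intro h; simpa using h
    | succ q ih =>
      intro h
      have hΛv : Λ ((Λ ^ q) z) = 0 := by
        rw [← Module.End.mul_apply, ← pow_succ' Λ q]
        exact h
      have hv_eq : (Λ ^ q) z = (Λ ^ (q + 2)) y := hzy q
      have hdegv : Prj (((s : ℤ) + 1) - 2 * ((q + 2 : ℕ) : ℤ)) ((Λ ^ q) z) = (Λ ^ q) z := by
        rw [hv_eq]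
        exact aux_degΛpow Λ Prj hΛdeg ((s : ℤ) + 1) y hy (q + 2)
      have hLv : (L ^ (m + (q + 2) + 1)) ((Λ ^ q) z) = 0 := by
        rw [hv_eq]; exact key (q + 2)
      have hv0 : (Λ ^ q) z = 0 := by
        refine aux_kill n Prj hsum horth L Λ H hLdeg hH sl₁ (m + (q + 2) + 1) _ _
          hdegv hΛv hLv ?_
        intro i hi
        have hi' : (i : ℤ) < (m : ℤ) + (q : ℤ) + 3 := by push_cast at hi ⊢; omega
        push_cast
        omega
      exact ih hv0
  have hbig : (Λ ^ (s + 2)) z = 0 := by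
    have hdeg := aux_degΛpow Λ Prj hΛdeg ((s : ℤ) + 1) y hy (s + 4)
    have hout : (((s : ℤ) + 1) - 2 * ((s + 4 : ℕ) : ℤ)) ∉ Finset.Icc (0 : ℤ) (2 * n) := by
      simp only [Finset.mem_Icc, not_and, not_le]
      intro hcon
      push_cast at hcon
      omega
    have h0 : (Λ ^ (s + 4)) y = 0 := aux_proj_out n Prj hsum horth _ hout _ hdeg
    rw [hzy (s + 2)]
    have : s + 2 + 2 = s + 4 := by omega
    rw [this, h0]
  have hz0 : z = 0 := claim (s + 2) hbig
  -- Step 6 : the decomposition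
  set c : ℝ := ((m : ℝ) + 1)⁻¹ with hc_def
  set B₂ : V := c • Λ y with hB₂_def
  set B₁ : V := y - L B₂ with hB₁_def
  have hΛydeg : Prj ((s : ℤ) - 1) (Λ y) = Λ y := by
    have h := aux_deg Λ Prj (-2) (by simpa [sub_eq_add_neg] using hΛdeg) ((s : ℤ) + 1) y hy
    have : (s : ℤ) + 1 + (-2) = (s : ℤ) - 1 := by ring
    rwa [this] at h
  have hB₂deg : Prj ((s : ℤ) - 1) B₂ = B₂ := by
    rw [hB₂_def, map_smul, hΛydeg]
  have hΛB₂ : Λ B₂ = 0 := by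
    rw [hB₂_def, map_smul, ← hz_def, hz0, smul_zero]
  have hLB₂deg : Prj ((s : ℤ) + 1) (L B₂) = L B₂ := by
    have h := aux_deg L Prj 2 hLdeg ((s : ℤ) - 1) B₂ hB₂deg
    have : (s : ℤ) - 1 + 2 = (s : ℤ) + 1 := by ring
    rwa [this] at h
  have hB₁deg : Prj ((s : ℤ) + 1) B₁ = B₁ := by
    rw [hB₁_def, map_sub, hy, hLB₂deg]
  have hmne : ((m : ℝ) + 1) ≠ 0 := by positivity
  have hΛLB₂ : Λ (L B₂) = Λ y := by
    have h := aux_comm1 n Prj hsum horth L Λ H hH sl₁ ((s : ℤ) - 1) B₂ hB₂deg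
    rw [hΛB₂, map_zero, zero_add] at h
    rw [h]
    have hcoef : (n : ℤ) - ((s : ℤ) - 1) = (m : ℤ) + 1 := by omega
    rw [hcoef, hB₂_def]
    rw [← Int.cast_smul_eq_zsmul ℝ ((m : ℤ) + 1) (c • Λ y), smul_smul]
    have : (((m : ℤ) + 1 : ℤ) : ℝ) = (m : ℝ) + 1 := by push_cast; ring
    rw [this, hc_def, mul_inv_cancel₀ hmne, one_smul]
  have hΛB₁ : Λ B₁ = 0 := by
    rw [hB₁_def, map_sub, hΛLB₂, sub_self]
  refine ⟨B₁, B₂, ⟨hB₁deg, hΛB₁⟩, ⟨hB₂deg, hΛB₂⟩, ?_, ?_, ?_⟩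
  · rw [hB₁_def]; abel
  · intro hsn
    refine aux_neg n Prj hsum horth L Λ H hLdeg hH sl₁ ((s : ℤ) + 1) B₁ hB₁deg hΛB₁ ?_
    omega
  · intro r
    have h1 : d ((L ^ r) B) = (L ^ r) (d B) := hdLpow r B
    have h2 : d B = B₁ + L B₂ := by rw [hB₁_def]; abel
    rw [h1, h2, map_add]
    congr 1
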